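/- arXiv:1403.0875 — 4 statements merged into one kernel-verified Lean document; each statement's English description precedes it below -/
import Mathlib

section
/- For a fixed pole ⊥ and closed arithmetical expressions e₁, e₂: if M ⊨ e₁ = e₂ then ‖e₁ = e₂‖ = ‖∀X (X ⇒ X)‖, and if M ⊨ e₁ ≠ e₂ then ‖e₁ = e₂‖ = ‖⊤ ⇒ ⊥‖ = Λ × Π. -/
/-- First-order arithmetical expressions (variables, zero, successor, and
symbols for arbitrary (primitive recursive) functions). -/
inductive Expr : Type
  | evar : ℕ → Expr
  | zero : Expr
  | succ : Expr → Expr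
  | fn : (ℕ → ℕ) → Expr → Expr
  | op : (ℕ → ℕ → ℕ) → Expr → Expr → Expr

/-- Standard interpretation of a first-order expression in ℕ, under a
first-order valuation `ρ`. -/
def Expr.eval (ρ : ℕ → ℕ) : Expr → ℕ
  | .evar n => ρ n
  | .zero => 0
  | .succ e => e.eval ρ + 1
  | .fn g e => g (e.eval ρ)
  | .op g e₁ e₂ => g (e₁.eval ρ) (e₂.eval ρ)

/-- Formulas of second-order arithmetic with parameters, over a type `St` of
stacks: (unary) second-order variables applied to an expression, (unary)
predicate parameters (falsity-value functions), implication, first-order and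
second-order universal quantification.  Variable binding is handled via named
variables and valuations. -/
inductive Fml (St : Type*) : Type _
  | svar : ℕ → Expr → Fml St
  | sparam : (ℕ → Set St) → Expr → Fml St
  | imp : Fml St → Fml St → Fml St
  | fall1 : ℕ → Fml St → Fml St
  | fall2 : ℕ → Fml St → Fml St

/-- Truth value `S^⊥` of a falsity value `S` w.r.t. a pole `B`. -/
def orth {Λ St : Type*} (B : Set (Λ × St)) (S : Set St) : Set Λ :=
  {t | ∀ π ∈ S, (t, π) ∈ B}

/-- Falsity value `‖A‖` of a formula, w.r.t. a pole `B`, a push operation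
`cons` on stacks, a first-order valuation `ρ₁` and a second-order valuation
`ρ₂` (mapping second-order variables to falsity-value functions). -/
def fv {Λ St : Type*} (cons : Λ → St → St) (B : Set (Λ × St)) :
    (ℕ → ℕ) → (ℕ → ℕ → Set St) → Fml St → Set St
  | ρ₁, ρ₂, .svar X e => ρ₂ X (e.eval ρ₁)
  | ρ₁, _, .sparam F e => F (e.eval ρ₁)
  | ρ₁, ρ₂, .imp A A' =>
      {σ | ∃ t π, t ∈ orth B (fv cons B ρ₁ ρ₂ A) ∧ π ∈ fv cons B ρ₁ ρ₂ A' ∧ σ = cons t π}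
  | ρ₁, ρ₂, .fall1 x A => ⋃ n : ℕ, fv cons B (Function.update ρ₁ x n) ρ₂ A
  | ρ₁, ρ₂, .fall2 X A => ⋃ F : ℕ → Set St, fv cons B ρ₁ (Function.update ρ₂ X F) A

/-- Leibniz equality `e₁ = e₂ ≡ ∀W (W(e₁) ⇒ W(e₂))`. -/
def eqFml {St : Type*} (e₁ e₂ : Expr) : Fml St :=
  .fall2 0 (.imp (.svar 0 e₁) (.svar 0 e₂))

/-- The identity type `∀X (X ⇒ X)` (with `X` of arity 0, encoded as a unary
variable applied to the constant 0). -/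
def idFml {St : Type*} : Fml St := .fall2 0 (.imp (.svar 0 .zero) (.svar 0 .zero))

/-- The formula `⊤ ⇒ ⊥`, where `‖⊤‖ = ∅` and `⊥ ≡ ∀Z Z`. -/
def topImpBotFml {St : Type*} : Fml St :=
  .imp (.sparam (fun _ => (∅ : Set St)) .zero) (.fall2 0 (.svar 0 .zero))

/-- Falsity value of Leibniz equality: if `⟦e₁⟧ = ⟦e₂⟧` then
`‖e₁ = e₂‖ = ‖∀X (X ⇒ X)‖`, and if `⟦e₁⟧ ≠ ⟦e₂⟧` then
`‖e₁ = e₂‖ = ‖⊤ ⇒ ⊥‖`, which is the set of all stacks of the form `t·π`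
(i.e. "`Λ × Π`"). -/
theorem eq_falsity_value {Λ St : Type*} (cons : Λ → St → St)
    (B : Set (Λ × St)) (ρ₁ : ℕ → ℕ) (ρ₂ : ℕ → ℕ → Set St) (e₁ e₂ : Expr) :
    (e₁.eval ρ₁ = e₂.eval ρ₁ →
      fv cons B ρ₁ ρ₂ (eqFml e₁ e₂) = fv cons B ρ₁ ρ₂ idFml) ∧
    (e₁.eval ρ₁ ≠ e₂.eval ρ₁ →
      fv cons B ρ₁ ρ₂ (eqFml e₁ e₂) = fv cons B ρ₁ ρ₂ topImpBotFml ∧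
      fv cons B ρ₁ ρ₂ (topImpBotFml) = {σ | ∃ t π, σ = cons t π}) := by
  constructor
  · intro h
    ext σ
    simp only [eqFml, idFml, fv, Function.update_self, Expr.eval, h,
      Set.mem_iUnion, Set.mem_setOf_eq]
    constructor
    · rintro ⟨F, t, π, ht, hπ, rfl⟩
      exact ⟨fun _ => F (e₂.eval ρ₁), t, π, ht, hπ, rfl⟩
    · rintro ⟨F, t, π, ht, hπ, rfl⟩
      exact ⟨fun _ => F 0, t, π, ht, hπ, rfl⟩
  · intro h
    have htop : fv cons B ρ₁ ρ₂ topImpBotFml = {σ | ∃ t π, σ = cons t π} := by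
      ext σ
      simp only [topImpBotFml, fv, Set.mem_setOf_eq]
      constructor
      · rintro ⟨t, π, _, _, rfl⟩; exact ⟨t, π, rfl⟩
      · rintro ⟨t, π, rfl⟩
        refine ⟨t, π, ?_, ?_, rfl⟩
        · intro x hx; exact absurd hx (Set.notMem_empty x)
        · simp only [Set.mem_iUnion]
          exact ⟨fun _ => Set.univ, by simp [Function.update_self]⟩
    refine ⟨?_, htop⟩
    rw [htop]
    ext σ
    simp only [eqFml, fv, Function.update_self, Set.mem_iUnion, Set.mem_setOf_eq]
    constructor
    · rintro ⟨F, t, π, _, _, rfl⟩; exact ⟨t, π, rfl⟩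
    · rintro ⟨t, π, rfl⟩
      refine ⟨fun m => if m = e₂.eval ρ₁ then Set.univ else ∅, t, π, ?_, ?_, rfl⟩
      · intro x hx
        simp only [if_neg h] at hx
        exact absurd hx (Set.notMem_empty x)
      · simp
end

section
/- A closed λc-term t universally realizes the identity type ∀X (X ⇒ X) if and only if t is identity-like, i.e., for all closed terms u and all stacks π, t ⋆ u·π ≻ u ⋆ π. -/
/-- Falsity value of the identity type `∀X (X ⇒ X)`:
`⋃_{S ⊆ Π} {u·π : u ∈ S^⊥, π ∈ S}`. -/
def idFalsity {Λ St : Type*} (cons : Λ → St → St) (B : Set (Λ × St)) : Set St :=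
  {σ | ∃ S : Set St, ∃ u π, u ∈ orth B S ∧ π ∈ S ∧ σ = cons u π}

/-- A pole: a set of processes closed under anti-evaluation. -/
def IsPole {Λ St : Type*} (step1 : Λ × St → Λ × St → Prop)
    (B : Set (Λ × St)) : Prop :=
  ∀ p p', Relation.ReflTransGen step1 p p' → p' ∈ B → p ∈ B

/-- A closed term `t` universally realizes the identity type `∀X (X ⇒ X)` if
and only if `t` is identity-like, i.e. `t ⋆ u·π ≻ u ⋆ π` for all `u`, `π`. -/
theorem univ_realizes_id_iff_identity_like {Λ St : Type*}
    (cons : Λ → St → St)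
    (hinj : ∀ t π t' π', cons t π = cons t' π' → t = t' ∧ π = π')
    (step1 : Λ × St → Λ × St → Prop) (t : Λ) :
    (∀ B : Set (Λ × St), IsPole step1 B → t ∈ orth B (idFalsity cons B)) ↔
    (∀ (u : Λ) (π : St), Relation.ReflTransGen step1 (t, cons u π) (u, π)) := by
  constructor
  · intro h u π
    have hpole : IsPole step1 {p : Λ × St | Relation.ReflTransGen step1 p (u, π)} := by
      intro p p' hpp' hp'
      exact hpp'.trans hp'
    have ht := h _ hpole
    have : cons u π ∈ idFalsity cons {p : Λ × St | Relation.ReflTransGen step1 p (u, π)} := by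
      exact ⟨{π}, u, π, fun π' hπ' => by simp at hπ'; subst hπ'; exact Relation.ReflTransGen.refl,
        rfl, rfl⟩
    exact ht _ this
  · intro h B hB σ hσ
    obtain ⟨S, u, π, hu, hπ, rfl⟩ := hσ
    exact hB _ _ (h u π) (hu π hπ)
end

section
/- Define the game G⁰ on a closed formula Φ ≡ ∃x₁∀y₁…∃x_h∀y_h (f(x₁,…,x_h,y₁,…,y_h)=0), with histories H of ∃-positions and winning sets W⁰ generated inductively by: (Win) H ∈ W⁰ if some (m⃗_h, n⃗_h) ∈ H satisfies f(m⃗_h,n⃗_h)=0; (Play) H ∈ W⁰ if there exist i < h, (m⃗_i, n⃗_i) ∈ H, and m ∈ ℕ such that for all n ∈ ℕ, H ∪ {(m⃗_i·m, n⃗_i·n)} ∈ W⁰. Then M ⊨ Φ if and only if {∅} ∈ W⁰_Φ. -/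
/-- Tarskian truth of the prenex formula
`∃x₁ ∀y₁ … ∃x_k ∀y_k (f(m⃗·x⃗, n⃗·y⃗) = 0)` in ℕ, with `k` remaining blocks of
quantifiers and accumulated choices `ms`, `ns`. -/
def GTruth (f : List ℕ → List ℕ → ℕ) : ℕ → List ℕ → List ℕ → Prop
  | 0, ms, ns => f ms ns = 0
  | k + 1, ms, ns => ∃ m : ℕ, ∀ n : ℕ, GTruth f k (ms ++ [m]) (ns ++ [n])

/-- Winning histories of the backtracking game `G⁰` on the formula
`∃x₁ ∀y₁ … ∃x_h ∀y_h (f(x⃗,y⃗) = 0)`.  A history is a set of ∃-positions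
`(m⃗_i, n⃗_i)`.  (Win): a complete position of `H` satisfies `f = 0`.
(Play): Eloise extends some position of `H` by an integer `m` and, whatever
Abelard answers `n`, the extended history is winning. -/
inductive W0 (h : ℕ) (f : List ℕ → List ℕ → ℕ) : Set (List ℕ × List ℕ) → Prop
  | win (H : Set (List ℕ × List ℕ)) (ms ns : List ℕ) :
      (ms, ns) ∈ H → ms.length = h → ns.length = h → f ms ns = 0 → W0 h f H
  | play (H : Set (List ℕ × List ℕ)) (ms ns : List ℕ) (i m : ℕ) :
      i < h → ms.length = i → ns.length = i → (ms, ns) ∈ H →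
      (∀ n : ℕ, W0 h f (H ∪ {(ms ++ [m], ns ++ [n])})) → W0 h f H

lemma gtruth_to_W0 (h : ℕ) (f : List ℕ → List ℕ → ℕ) :
    ∀ (k : ℕ) (ms ns : List ℕ) (H : Set (List ℕ × List ℕ)),
      ms.length + k = h → ns.length = ms.length → (ms, ns) ∈ H →
      GTruth f k ms ns → W0 h f H := by
  intro k
  induction k with
  | zero =>
    intro ms ns H hlen hlen' hmem ht
    exact W0.win H ms ns hmem (by omega) (by omega) ht
  | succ k ih =>
    intro ms ns H hlen hlen' hmem ht
    obtain ⟨m, hm⟩ := ht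
    refine W0.play H ms ns ms.length m (by omega) rfl hlen' hmem (fun n => ?_)
    exact ih (ms ++ [m]) (ns ++ [n]) _ (by simp; omega) (by simp [hlen'])
      (Or.inr rfl) (hm n)

lemma W0_to_gtruth (h : ℕ) (f : List ℕ → List ℕ → ℕ)
    (H : Set (List ℕ × List ℕ)) (hw : W0 h f H)
    (inv : ∀ ms ns : List ℕ, (ms, ns) ∈ H → ms.length = ns.length →
      ∀ k, ms.length + k = h → ¬ GTruth f k ms ns) : False := by
  induction hw with
  | win H ms ns hmem hms hns hf =>
    exact inv ms ns hmem (by omega) 0 (by omega) hf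
  | play H ms ns i m hi hms hns hmem _ ih =>
    obtain ⟨k, hk⟩ : ∃ k, i + (k + 1) = h := ⟨h - i - 1, by omega⟩
    have hne := inv ms ns hmem (by omega) (k + 1) (by omega)
    rw [show GTruth f (k+1) ms ns = ∃ m, ∀ n, GTruth f k (ms ++ [m]) (ns ++ [n])
      from rfl] at hne
    push_neg at hne
    obtain ⟨n, hn⟩ := hne m
    refine ih n ?_
    intro ms' ns' hmem' hlen' k' hk'
    rcases hmem' with h1 | h1
    · exact inv ms' ns' h1 hlen' k' hk'
    · have h2 : ms' = ms ++ [m] ∧ ns' = ns ++ [n] := Prod.mk.injEq .. ▸ h1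
      obtain ⟨rfl, rfl⟩ := h2
      have : k' = k := by simp at hk'; omega
      subst this
      exact hn
    
/-- A closed formula `Φ ≡ ∃x₁ ∀y₁ … ∃x_h ∀y_h (f(x⃗,y⃗)=0)` is true in the
standard model ℕ if and only if the initial history (containing only the
empty position) is winning for Eloise in the game `G⁰_Φ`. -/
theorem gtruth_iff_W0 (h : ℕ) (f : List ℕ → List ℕ → ℕ) :
    GTruth f h [] [] ↔ W0 h f {([], [])} := by
  constructor
  · intro ht
    exact gtruth_to_W0 h f h [] [] _ (by simp) rfl rfl ht
  · intro hw
    by_contra hne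
    refine W0_to_gtruth h f _ hw ?_
    intro ms ns hmem hlen k hk
    simp only [Set.mem_singleton_iff, Prod.mk.injEq] at hmem
    obtain ⟨rfl, rfl⟩ := hmem
    have : k = h := by simpa using hk
    subst this
    exact hne
end

section
/- If Eloise has a winning strategy in the backtracking game G⁰_Φ (i.e., {∅} ∈ W⁰_Φ), then she has a winning strategy in the game without backtrack, i.e., the alternating quantifier statement ∃m₁∀n₁…∃m_h∀n_h (f(m⃗,n⃗)=0) holds in ℕ. -/
lemma W0_aux (h : ℕ) (f : List ℕ → List ℕ → ℕ) (H : Set (List ℕ × List ℕ))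
    (hw : W0 h f H) :
    ∃ ms ns, (ms, ns) ∈ H ∧ GTruth f (h - ms.length) ms ns := by
  classical
  induction hw with
  | win H ms ns hmem hml hnl hf =>
      exact ⟨ms, ns, hmem, by simp [hml, GTruth, hf]⟩
  | play H ms ns i m hi hml hnl hmem hW ih =>
      rcases Classical.em (∃ n : ℕ, ∃ ms' ns', (ms', ns') ∈ H ∧
          GTruth f (h - ms'.length) ms' ns') with hx | hx
      · obtain ⟨n, ms', ns', hm, hg⟩ := hx
        exact ⟨ms', ns', hm, hg⟩
      · push_neg at hx
        refine ⟨ms, ns, hmem, ?_⟩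
        have hlen : h - ms.length = (h - (ms.length + 1)) + 1 := by omega
        rw [hlen]
        refine ⟨m, fun n => ?_⟩
        obtain ⟨ms', ns', hm, hg⟩ := ih n
        rcases hm with hm | hm
        · exact absurd hg (hx n ms' ns' hm)
        · simp only [Set.mem_singleton_iff, Prod.mk.injEq] at hm
          obtain ⟨rfl, rfl⟩ := hm
          simpa using hg

/-- If Eloise has a winning strategy in the backtracking game `G⁰_Φ`, then
the alternating quantifier statement `∃m₁ ∀n₁ … ∃m_h ∀n_h (f(m⃗,n⃗)=0)` holds
in ℕ. -/
theorem W0_implies_gtruth (h : ℕ) (f : List ℕ → List ℕ → ℕ)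
    (hw : W0 h f {([], [])}) : GTruth f h [] [] := by
  obtain ⟨ms, ns, hmem, hg⟩ := W0_aux h f _ hw
  simp only [Set.mem_singleton_iff, Prod.mk.injEq] at hmem
  obtain ⟨rfl, rfl⟩ := hmem
  simpa using hg
end
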